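/- Let p be a prime and m ∈ ℕ. For every ε > 0 there exists C ∈ ℕ such that for all ν = (ν₁,ν₂,ν₃,ν₄) ∈ ℕ⁴ with |ν| = ν₁+ν₂+ν₃+ν₄ ≥ C one has |v_p(q^(m)_{ν₁}!·q^(m)_{ν₂}!·q^(m)_{ν₃}!·q^(m)_{ν₄}!) − |ν|/((p−1)p^m)| ≤ ε·|ν|. In other words, v_p(q^(m)_{ν₁}!·q^(m)_{ν₂}!·q^(m)_{ν₃}!·q^(m)_{ν₄}!) is asymptotic to |ν|/((p−1)p^m) as |ν| → ∞. -/

import Mathlib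

/-!
STATEMENT 3: Let `p` be a prime and `m : ℕ`. For every `ε > 0` there exists
`C : ℕ` such that for all `ν = (ν₁,ν₂,ν₃,ν₄) ∈ ℕ⁴` with `|ν| ≥ C` one has
`|v_p(q^(m)_{ν₁}!·q^(m)_{ν₂}!·q^(m)_{ν₃}!·q^(m)_{ν₄}!) − |ν|/((p−1)p^m)| ≤ ε·|ν|`;
i.e. `v_p(…)` is asymptotic to `|ν|/((p−1)p^m)` as `|ν| → ∞`.

Here `q^(m)_n = ⌊n/p^m⌋` and `v_p` is the `p`-adic valuation (`padicValNat`).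
-/

/-- `q^(m)_n = ⌊n / p^m⌋`. -/
def qm (p m n : ℕ) : ℕ := n / p ^ m

variable (p : ℕ) [Fact p.Prime]

lemma myupper (k : ℕ) : (padicValNat p k.factorial : ℝ) ≤ k / ((p:ℝ) - 1) := by
  have hp2 : 2 ≤ p := (Fact.out : p.Prime).two_le
  have h : (p - 1) * padicValNat p k.factorial ≤ k := by
    rw [sub_one_mul_padicValNat_factorial]; exact Nat.sub_le _ _
  have hcast : ((p:ℝ) - 1) * (padicValNat p k.factorial : ℝ) ≤ (k : ℝ) := by
    have := (Nat.cast_le (α := ℝ)).mpr h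
    push_cast [Nat.cast_sub (by omega : 1 ≤ p)] at this
    linarith
  have hpos : (0:ℝ) < (p:ℝ) - 1 := by
    have : (2:ℝ) ≤ p := by exact_mod_cast hp2
    linarith
  rw [le_div_iff₀ hpos]; linarith [hcast]

lemma mygeom (L : ℕ) : ∑ i ∈ Finset.Ico 1 (L+1), (1:ℝ)/(p:ℝ)^i
    = 1/((p:ℝ)-1) - 1/(((p:ℝ)-1)*(p:ℝ)^L) := by
  have hp2 : 2 ≤ p := (Fact.out : p.Prime).two_le
  have hp : (2:ℝ) ≤ p := by exact_mod_cast hp2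
  induction L with
  | zero => simp
  | succ L ih =>
    rw [Finset.sum_Ico_succ_top (by omega), ih]
    have h1 : ((p:ℝ)-1) ≠ 0 := by linarith
    have h2 : (p:ℝ) ≠ 0 := by linarith
    field_simp
    ring

lemma mylower (L k : ℕ) :
    (k:ℝ)/((p:ℝ)-1) - (k:ℝ)/(((p:ℝ)-1)*(p:ℝ)^L) - L ≤ (padicValNat p k.factorial : ℝ) := by
  have hp2 : 2 ≤ p := (Fact.out : p.Prime).two_le
  have hp : (2:ℝ) ≤ p := by exact_mod_cast hp2
  set b := max (L+1) (Nat.log p k + 1) with hb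
  have hlog : Nat.log p k < b := lt_of_lt_of_le (Nat.lt_succ_self _) (le_max_right _ _)
  have hleg := padicValNat_factorial (p := p) (n := k) hlog
  have hsub : Finset.Ico 1 (L+1) ⊆ Finset.Ico 1 b := by
    apply Finset.Ico_subset_Ico le_rfl (le_max_left _ _)
  have hN : ∑ i ∈ Finset.Ico 1 (L+1), k / p ^ i ≤ padicValNat p k.factorial := by
    rw [hleg]; exact Finset.sum_le_sum_of_subset hsub
  have hterm : ∀ i ∈ Finset.Ico 1 (L+1), (k:ℝ)/(p:ℝ)^i - 1 ≤ ((k / p ^ i : ℕ) : ℝ) := by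
    intro i _
    have hppos : 0 < p ^ i := Nat.pow_pos (by omega)
    have hdm := Nat.div_add_mod k (p ^ i)
    have hmod := Nat.mod_lt k hppos
    have hk : k < (k / p ^ i + 1) * p ^ i := by
      calc k = p ^ i * (k / p ^ i) + k % p ^ i := hdm.symm
        _ < p ^ i * (k / p ^ i) + p ^ i := by omega
        _ = (k / p ^ i + 1) * p ^ i := by ring
    have hcast : (k:ℝ) < ((k / p ^ i : ℕ) + 1) * (p:ℝ)^i := by exact_mod_cast hk
    have hpow : (0:ℝ) < (p:ℝ)^i := by positivity
    rw [sub_le_iff_le_add, div_le_iff₀ hpow]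
    nlinarith [hcast]
  have hsum : ∑ i ∈ Finset.Ico 1 (L+1), ((k:ℝ)/(p:ℝ)^i - 1)
      ≤ ((∑ i ∈ Finset.Ico 1 (L+1), k / p ^ i : ℕ) : ℝ) := by
    push_cast
    exact Finset.sum_le_sum hterm
  have hsumeq : ∑ i ∈ Finset.Ico 1 (L+1), ((k:ℝ)/(p:ℝ)^i - 1)
      = (k:ℝ)/((p:ℝ)-1) - (k:ℝ)/(((p:ℝ)-1)*(p:ℝ)^L) - L := by
    rw [Finset.sum_sub_distrib]
    simp only [Finset.sum_const, Nat.card_Ico]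
    have := mygeom p L
    have h1 : ∑ i ∈ Finset.Ico 1 (L+1), (k:ℝ)/(p:ℝ)^i
        = (k:ℝ) * ∑ i ∈ Finset.Ico 1 (L+1), (1:ℝ)/(p:ℝ)^i := by
      rw [Finset.mul_sum]; congr 1; ext i; ring
    rw [h1, this]
    have h1' : ((p:ℝ)-1) ≠ 0 := by linarith
    have h2' : (p:ℝ) ≠ 0 := by linarith
    have h3' : ((p:ℝ))^L ≠ 0 := by positivity
    push_cast
    field_simp
    ring
  calc (k:ℝ)/((p:ℝ)-1) - (k:ℝ)/(((p:ℝ)-1)*(p:ℝ)^L) - L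
      = ∑ i ∈ Finset.Ico 1 (L+1), ((k:ℝ)/(p:ℝ)^i - 1) := hsumeq.symm
    _ ≤ ((∑ i ∈ Finset.Ico 1 (L+1), k / p ^ i : ℕ) : ℝ) := hsum
    _ ≤ _ := by exact_mod_cast hN


lemma mybounds (m L k : ℕ) :
    (k:ℝ)/(((p:ℝ)-1)*(p:ℝ)^m) - 1 - (k:ℝ)*(1/2:ℝ)^L - L
      ≤ (padicValNat p (qm p m k).factorial : ℝ)
    ∧ (padicValNat p (qm p m k).factorial : ℝ) ≤ (k:ℝ)/(((p:ℝ)-1)*(p:ℝ)^m) := by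
  have hp2 : 2 ≤ p := (Fact.out : p.Prime).two_le
  have hp : (2:ℝ) ≤ p := by exact_mod_cast hp2
  have hA : (1:ℝ) ≤ (p:ℝ) - 1 := by linarith
  have hApos : (0:ℝ) < (p:ℝ) - 1 := by linarith
  have hPpos : (0:ℝ) < (p:ℝ)^m := by positivity
  set q := qm p m k with hq
  have hqle : (q:ℝ) ≤ (k:ℝ)/(p:ℝ)^m := by
    have := Nat.cast_div_le (m := k) (n := p^m) (α := ℝ)
    rw [hq]; unfold qm
    push_cast at this ⊢
    exact this
  have hqge : (k:ℝ)/(p:ℝ)^m - 1 ≤ (q:ℝ) := by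
    have hppos : 0 < p ^ m := Nat.pow_pos (by omega)
    have hdm := Nat.div_add_mod k (p ^ m)
    have hmod := Nat.mod_lt k hppos
    have hk : k < (q + 1) * p ^ m := by
      rw [hq]; unfold qm
      calc k = p ^ m * (k / p ^ m) + k % p ^ m := hdm.symm
        _ < p ^ m * (k / p ^ m) + p ^ m := by omega
        _ = (k / p ^ m + 1) * p ^ m := by ring
    have hcast : (k:ℝ) < ((q:ℝ) + 1) * (p:ℝ)^m := by exact_mod_cast hk
    rw [sub_le_iff_le_add, div_le_iff₀ hPpos]
    nlinarith
  have hqk : (q:ℝ) ≤ (k:ℝ) := by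
    rw [hq]; unfold qm; exact_mod_cast Nat.div_le_self _ _
  have hqnn : (0:ℝ) ≤ (q:ℝ) := Nat.cast_nonneg _
  have hAne : ((p:ℝ)-1) ≠ 0 := ne_of_gt hApos
  have hdivdiv : (k:ℝ)/(((p:ℝ)-1)*(p:ℝ)^m) = ((k:ℝ)/(p:ℝ)^m)/((p:ℝ)-1) := by
    rw [div_div, mul_comm]
  constructor
  · -- lower bound
    have h1 := mylower p L q
    have h2 : (k:ℝ)/(((p:ℝ)-1)*(p:ℝ)^m) - 1 ≤ (q:ℝ)/((p:ℝ)-1) := by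
      rw [hdivdiv, show ((k:ℝ)/(p:ℝ)^m)/((p:ℝ)-1) - 1
          = ((k:ℝ)/(p:ℝ)^m - ((p:ℝ)-1))/((p:ℝ)-1) from by
            rw [sub_div, div_self hAne]]
      exact (div_le_div_iff_of_pos_right hApos).mpr (by linarith)
    have h4 : (q:ℝ)/(((p:ℝ)-1)*(p:ℝ)^L) ≤ (k:ℝ)*(1/2:ℝ)^L := by
      have h2L : (0:ℝ) < (2:ℝ)^L := by positivity
      have hden : (2:ℝ)^L ≤ ((p:ℝ)-1)*(p:ℝ)^L := by
        have hpow : (2:ℝ)^L ≤ (p:ℝ)^L := pow_le_pow_left₀ (by norm_num) hp L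
        nlinarith [pow_pos (show (0:ℝ) < p by linarith) L]
      calc (q:ℝ)/(((p:ℝ)-1)*(p:ℝ)^L) ≤ (q:ℝ)/(2:ℝ)^L :=
            div_le_div_of_nonneg_left hqnn h2L hden
        _ = (q:ℝ)*(1/2:ℝ)^L := by rw [div_pow, one_pow, div_eq_mul_one_div]
        _ ≤ (k:ℝ)*(1/2:ℝ)^L := by
            apply mul_le_mul_of_nonneg_right hqk (by positivity)
    linarith
  · -- upper bound
    have h1 := myupper p q
    calc (padicValNat p q.factorial : ℝ) ≤ (q:ℝ)/((p:ℝ)-1) := h1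
      _ ≤ ((k:ℝ)/(p:ℝ)^m)/((p:ℝ)-1) := (div_le_div_iff_of_pos_right hApos).mpr hqle
      _ = (k:ℝ)/(((p:ℝ)-1)*(p:ℝ)^m) := hdivdiv.symm

theorem padicVal_qfac_asymptotic (p : ℕ) [Fact p.Prime] (m : ℕ)
    (ε : ℝ) (hε : 0 < ε) :
    ∃ C : ℕ, ∀ ν₁ ν₂ ν₃ ν₄ : ℕ, C ≤ ν₁ + ν₂ + ν₃ + ν₄ →
      |((padicValNat p ((qm p m ν₁).factorial * (qm p m ν₂).factorial *
            (qm p m ν₃).factorial * (qm p m ν₄).factorial) : ℕ) : ℝ) -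
          ((ν₁ + ν₂ + ν₃ + ν₄ : ℕ) : ℝ) / (((p : ℝ) - 1) * (p : ℝ) ^ m)| ≤
        ε * ((ν₁ + ν₂ + ν₃ + ν₄ : ℕ) : ℝ) := by
  obtain ⟨L, hL⟩ : ∃ L : ℕ, ((1:ℝ)/2)^L ≤ ε/2 := by
    obtain ⟨L, hL⟩ := exists_pow_lt_of_lt_one (half_pos hε) (by norm_num : (1:ℝ)/2 < 1)
    exact ⟨L, hL.le⟩
  refine ⟨⌈(2*(4 + 4*(L:ℝ)))/ε⌉₊, fun ν₁ ν₂ ν₃ ν₄ hC => ?_⟩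
  have hn : (2*(4 + 4*(L:ℝ)))/ε ≤ ((ν₁ + ν₂ + ν₃ + ν₄ : ℕ) : ℝ) := Nat.ceil_le.mp hC
  have hCn : 8 + 8*(L:ℝ) ≤ ε * ((ν₁ + ν₂ + ν₃ + ν₄ : ℕ) : ℝ) := by
    rw [div_le_iff₀ hε] at hn
    linarith
  -- decompose the valuation
  have hne : ∀ k : ℕ, k.factorial ≠ 0 := fun k => Nat.factorial_ne_zero k
  have hV : padicValNat p ((qm p m ν₁).factorial * (qm p m ν₂).factorial *
      (qm p m ν₃).factorial * (qm p m ν₄).factorial)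
      = padicValNat p (qm p m ν₁).factorial + padicValNat p (qm p m ν₂).factorial
        + padicValNat p (qm p m ν₃).factorial + padicValNat p (qm p m ν₄).factorial := by
    rw [padicValNat.mul (by positivity) (hne _), padicValNat.mul (by positivity) (hne _),
      padicValNat.mul (hne _) (hne _)]
  obtain ⟨hl1, hu1⟩ := mybounds p m L ν₁
  obtain ⟨hl2, hu2⟩ := mybounds p m L ν₂
  obtain ⟨hl3, hu3⟩ := mybounds p m L ν₃
  obtain ⟨hl4, hu4⟩ := mybounds p m L ν₄
  have hbridge : ((ν₁:ℝ)+ν₂+ν₃+ν₄)*((1:ℝ)/2)^L ≤ ((ν₁:ℝ)+ν₂+ν₃+ν₄)*(ε/2) :=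
    mul_le_mul_of_nonneg_left hL (by positivity)
  have hp2 : 2 ≤ p := (Fact.out : p.Prime).two_le
  have hp : (2:ℝ) ≤ p := by exact_mod_cast hp2
  have hApos : (0:ℝ) < (p:ℝ) - 1 := by linarith
  have hPpos : (0:ℝ) < (p:ℝ)^m := by positivity
  have hsum : ((ν₁:ℝ)+ν₂+ν₃+ν₄)/(((p:ℝ)-1)*(p:ℝ)^m)
      = (ν₁:ℝ)/(((p:ℝ)-1)*(p:ℝ)^m) + (ν₂:ℝ)/(((p:ℝ)-1)*(p:ℝ)^m)
        + (ν₃:ℝ)/(((p:ℝ)-1)*(p:ℝ)^m) + (ν₄:ℝ)/(((p:ℝ)-1)*(p:ℝ)^m) := by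
    field_simp
  rw [hV, abs_le]
  push_cast at hCn ⊢
  constructor <;> linarith
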